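/- For every real numbers α, β > -1 there exist positive constants c₁, c₂ (depending only on α and β) such that for all integers N ≥ 3, c₁·N^(α+β+1) ≤ ∑_{n=1}^{N-1} n^α (N-n)^β ≤ c₂·N^(α+β+1). -/

import Mathlib

open Real Finset

lemma aux_key (α : ℝ) (hα : -1 < α) {x : ℝ} (hx : 1 ≤ x) :
    x ^ α * (α + 1) ≤ max 1 (2 ^ (-α)) * ((x + 1) ^ (α + 1) - x ^ (α + 1)) := by
  have hx0 : (0 : ℝ) < x := lt_of_lt_of_le one_pos hx
  have hp : (0 : ℝ) < α + 1 := by linarith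
  rcases le_or_gt 1 (α + 1) with hp1 | hp1
  · -- p ≥ 1 case
    have hs : (-1 : ℝ) ≤ 1 / x := by
      have : (0:ℝ) < 1 / x := by positivity
      linarith
    have hb := one_add_mul_self_le_rpow_one_add hs hp1
    have hmul : (1 + 1 / x) ^ (α + 1) * x ^ (α + 1) = (x + 1) ^ (α + 1) := by
      rw [← Real.mul_rpow (by positivity) hx0.le]
      congr 1
      field_simp
    have hxα : x ^ α = x ^ (α + 1) / x := by
      rw [show α = α + 1 - 1 by ring, Real.rpow_sub hx0, Real.rpow_one]
      ring_nf
    have h2 : (1 + (α + 1) * (1 / x)) * x ^ (α + 1) ≤ (x + 1) ^ (α + 1) := by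
      calc (1 + (α + 1) * (1 / x)) * x ^ (α + 1)
          ≤ (1 + 1 / x) ^ (α + 1) * x ^ (α + 1) :=
            mul_le_mul_of_nonneg_right hb (by positivity)
        _ = (x + 1) ^ (α + 1) := hmul
    have h3 : x ^ (α + 1) + (α + 1) * x ^ α ≤ (x + 1) ^ (α + 1) := by
      have : (1 + (α + 1) * (1 / x)) * x ^ (α + 1)
          = x ^ (α + 1) + (α + 1) * (x ^ (α + 1) / x) := by ring
      rw [hxα]
      linarith [h2, this ▸ h2]
    have hmax : (1 : ℝ) ≤ max 1 (2 ^ (-α)) := le_max_left _ _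
    have hxa : (0:ℝ) ≤ x ^ α := Real.rpow_nonneg hx0.le _
    have hxap : (0:ℝ) ≤ x ^ α * (α + 1) := mul_nonneg hxa hp.le
    have hd : x ^ α * (α + 1) ≤ (x + 1) ^ (α + 1) - x ^ (α + 1) := by linarith
    calc x ^ α * (α + 1) ≤ 1 * ((x + 1) ^ (α + 1) - x ^ (α + 1)) := by linarith
      _ ≤ max 1 (2 ^ (-α)) * ((x + 1) ^ (α + 1) - x ^ (α + 1)) :=
        mul_le_mul_of_nonneg_right hmax (by linarith)
  · -- p < 1 case, α < 0
    have hα0 : α < 0 := by linarith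
    have hx1 : (0 : ℝ) < x + 1 := by linarith
    have hs : (-1 : ℝ) ≤ -(1 / (x + 1)) := by
      rw [neg_le_neg_iff]
      rw [div_le_one hx1]; linarith
    have hb := rpow_one_add_le_one_add_mul_self hs hp.le hp1.le
    have he : (1 : ℝ) + -(1 / (x + 1)) = x / (x + 1) := by field_simp; ring
    rw [he] at hb
    -- hb : (x/(x+1))^(α+1) ≤ 1 + (α+1) * -(1/(x+1))
    have hmul : (x / (x + 1)) ^ (α + 1) * (x + 1) ^ (α + 1) = x ^ (α + 1) := by
      rw [← Real.mul_rpow (by positivity) hx1.le]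
      congr 1
      field_simp
    have hyα : (x + 1) ^ α = (x + 1) ^ (α + 1) / (x + 1) := by
      rw [show α = α + 1 - 1 by ring, Real.rpow_sub hx1, Real.rpow_one]
      ring_nf
    have h2 : x ^ (α + 1) ≤ (1 + (α + 1) * -(1 / (x + 1))) * (x + 1) ^ (α + 1) := by
      rw [← hmul]
      exact mul_le_mul_of_nonneg_right hb (by positivity)
    have h3 : x ^ (α + 1) ≤ (x + 1) ^ (α + 1) - (α + 1) * (x + 1) ^ α := by
      have : (1 + (α + 1) * -(1 / (x + 1))) * (x + 1) ^ (α + 1)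
          = (x + 1) ^ (α + 1) - (α + 1) * ((x + 1) ^ (α + 1) / (x + 1)) := by ring
      rw [hyα]; linarith [this ▸ h2]
    -- x^α ≤ 2^(-α) * (x+1)^α
    have hxe : x ^ α ≤ 2 ^ (-α) * (x + 1) ^ α := by
      have h2x : x + 1 ≤ 2 * x := by linarith
      have := Real.rpow_le_rpow_of_nonpos hx1 h2x hα0.le
      -- (2x)^α ≤ (x+1)^α
      have hm : (2 * x) ^ α = 2 ^ α * x ^ α := Real.mul_rpow (by norm_num) hx0.le
      have h22 : (2 : ℝ) ^ (-α) * 2 ^ α = 1 := by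
        rw [← Real.rpow_add (by norm_num)]; simp
      calc x ^ α = 2 ^ (-α) * (2 ^ α * x ^ α) := by
            rw [← mul_assoc, h22, one_mul]
        _ ≤ 2 ^ (-α) * (x + 1) ^ α := by
            rw [← hm]
            exact mul_le_mul_of_nonneg_left this (by positivity)
    have hmax : (2 : ℝ) ^ (-α) ≤ max 1 (2 ^ (-α)) := le_max_right _ _
    have hy0 : (0 : ℝ) ≤ (x + 1) ^ α := Real.rpow_nonneg hx1.le α
    calc x ^ α * (α + 1) ≤ 2 ^ (-α) * (x + 1) ^ α * (α + 1) :=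
          mul_le_mul_of_nonneg_right (hxe) hp.le
      _ ≤ max 1 (2 ^ (-α)) * ((α + 1) * (x + 1) ^ α) := by
          rw [mul_comm (α+1)]
          exact mul_le_mul_of_nonneg_right (mul_le_mul_of_nonneg_right hmax hy0)
            (by positivity) |>.trans_eq (by ring)
      _ ≤ max 1 (2 ^ (-α)) * ((x + 1) ^ (α + 1) - x ^ (α + 1)) := by
          apply mul_le_mul_of_nonneg_left _ (le_trans zero_le_one (le_max_left _ _))
          linarith

lemma aux_sum (α : ℝ) (hα : -1 < α) (M : ℕ) :
    ∑ n ∈ Finset.Ico 1 M, (n : ℝ) ^ α ≤ (max 1 (2 ^ (-α)) / (α + 1)) * (M : ℝ) ^ (α + 1) := by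
  have hp : (0 : ℝ) < α + 1 := by linarith
  have hC : (0 : ℝ) < max 1 (2 ^ (-α)) := lt_of_lt_of_le one_pos (le_max_left _ _)
  rcases Nat.eq_zero_or_pos M with rfl | hM
  · simp [Real.zero_rpow hp.ne']
  have key : ∀ n ∈ Finset.Ico 1 M, (n : ℝ) ^ α ≤
      (max 1 (2 ^ (-α)) / (α + 1)) * (((n + 1 : ℕ) : ℝ) ^ (α + 1) - ((n : ℕ) : ℝ) ^ (α + 1)) := by
    intro n hn
    have hn1 : 1 ≤ n := (Finset.mem_Ico.mp hn).1
    have hx : (1 : ℝ) ≤ (n : ℝ) := by exact_mod_cast hn1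
    have := aux_key α hα hx
    rw [div_mul_eq_mul_div, le_div_iff₀ hp]
    push_cast
    linarith
  calc ∑ n ∈ Finset.Ico 1 M, (n : ℝ) ^ α
      ≤ ∑ n ∈ Finset.Ico 1 M, (max 1 (2 ^ (-α)) / (α + 1)) *
          (((n + 1 : ℕ) : ℝ) ^ (α + 1) - ((n : ℕ) : ℝ) ^ (α + 1)) :=
        Finset.sum_le_sum key
    _ = (max 1 (2 ^ (-α)) / (α + 1)) *
          ∑ n ∈ Finset.Ico 1 M, (((n + 1 : ℕ) : ℝ) ^ (α + 1) - ((n : ℕ) : ℝ) ^ (α + 1)) := by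
        rw [Finset.mul_sum]
    _ ≤ (max 1 (2 ^ (-α)) / (α + 1)) * (M : ℝ) ^ (α + 1) := by
        apply mul_le_mul_of_nonneg_left _ (by positivity)
        set g : ℕ → ℝ := fun k => ((k : ℕ) : ℝ) ^ (α + 1) with hg
        have htel : ∑ n ∈ Finset.Ico 1 M, (g (n + 1) - g n) = g M - g 1 := by
          rw [Finset.sum_Ico_eq_sub _ hM, Finset.sum_range_sub g, Finset.sum_range_sub g]
          ring
        have hsummand : ∑ n ∈ Finset.Ico 1 M, (((n + 1 : ℕ) : ℝ) ^ (α + 1) - ((n : ℕ) : ℝ) ^ (α + 1))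
            = g M - g 1 := htel
        rw [hsummand]
        have hg1 : g 1 = 1 := by simp [hg]
        have hgM : g M = (M : ℝ) ^ (α + 1) := rfl
        rw [hg1, hgM]
        linarith

lemma aux_max (γ : ℝ) {y Nr : ℝ} (hN : 0 < Nr) (h1 : Nr / 2 ≤ y) (h2 : y ≤ Nr) :
    y ^ γ ≤ max 1 (2 ^ (-γ)) * Nr ^ γ := by
  have hy : 0 < y := lt_of_lt_of_le (by positivity) h1
  rcases le_or_gt 0 γ with hγ | hγ
  · calc y ^ γ ≤ Nr ^ γ := Real.rpow_le_rpow hy.le h2 hγ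
      _ = 1 * Nr ^ γ := (one_mul _).symm
      _ ≤ max 1 (2 ^ (-γ)) * Nr ^ γ :=
        mul_le_mul_of_nonneg_right (le_max_left _ _) (Real.rpow_nonneg hN.le _)
  · have := Real.rpow_le_rpow_of_nonpos (by positivity : (0:ℝ) < Nr / 2) h1 hγ.le
    have hd : (Nr / 2) ^ γ = 2 ^ (-γ) * Nr ^ γ := by
      rw [Real.div_rpow hN.le (by norm_num), Real.rpow_neg (by norm_num)]
      ring
    calc y ^ γ ≤ (Nr / 2) ^ γ := this
      _ = 2 ^ (-γ) * Nr ^ γ := hd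
      _ ≤ max 1 (2 ^ (-γ)) * Nr ^ γ :=
        mul_le_mul_of_nonneg_right (le_max_right _ _) (Real.rpow_nonneg hN.le _)

lemma aux_min (γ : ℝ) {y Nr : ℝ} (hN : 0 < Nr) (h1 : Nr / 9 ≤ y) (h2 : y ≤ Nr) :
    min 1 (9 ^ (-γ)) * Nr ^ γ ≤ y ^ γ := by
  have hy : 0 < y := lt_of_lt_of_le (by positivity) h1
  rcases le_or_gt 0 γ with hγ | hγ
  · have := Real.rpow_le_rpow (by positivity) h1 hγ
    have hd : (Nr / 9) ^ γ = 9 ^ (-γ) * Nr ^ γ := by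
      rw [Real.div_rpow hN.le (by norm_num), Real.rpow_neg (by norm_num)]
      ring
    calc min 1 (9 ^ (-γ)) * Nr ^ γ ≤ 9 ^ (-γ) * Nr ^ γ :=
        mul_le_mul_of_nonneg_right (min_le_right _ _) (Real.rpow_nonneg hN.le _)
      _ = (Nr / 9) ^ γ := hd.symm
      _ ≤ y ^ γ := this
  · calc min 1 (9 ^ (-γ)) * Nr ^ γ ≤ 1 * Nr ^ γ :=
        mul_le_mul_of_nonneg_right (min_le_left _ _) (Real.rpow_nonneg hN.le _)
      _ = Nr ^ γ := one_mul _
      _ ≤ y ^ γ := Real.rpow_le_rpow_of_nonpos hy h2 hγ.le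

theorem stmt0 (α β : ℝ) (hα : -1 < α) (hβ : -1 < β) :
    ∃ c₁ c₂ : ℝ, 0 < c₁ ∧ 0 < c₂ ∧ ∀ N : ℕ, 3 ≤ N →
      c₁ * (N : ℝ) ^ (α + β + 1) ≤
        ∑ n ∈ Finset.Ico 1 N, (n : ℝ) ^ α * ((N : ℝ) - n) ^ β ∧
      ∑ n ∈ Finset.Ico 1 N, (n : ℝ) ^ α * ((N : ℝ) - n) ^ β ≤
        c₂ * (N : ℝ) ^ (α + β + 1) := by
  set Kα := max 1 ((2:ℝ) ^ (-α)) with hKαdef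
  set Kβ := max 1 ((2:ℝ) ^ (-β)) with hKβdef
  set mα := min 1 ((9:ℝ) ^ (-α)) with hmαdef
  set mβ := min 1 ((9:ℝ) ^ (-β)) with hmβdef
  have hpα : (0:ℝ) < α + 1 := by linarith
  have hpβ : (0:ℝ) < β + 1 := by linarith
  have hKα0 : 0 < Kα := lt_of_lt_of_le one_pos (le_max_left _ _)
  have hKβ0 : 0 < Kβ := lt_of_lt_of_le one_pos (le_max_left _ _)
  have hmα0 : 0 < mα := lt_min one_pos (by positivity)
  have hmβ0 : 0 < mβ := lt_min one_pos (by positivity)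
  refine ⟨mα * mβ / 9, Kβ * (Kα / (α + 1)) + Kα * (Kβ / (β + 1)), by positivity, by positivity,
    fun N hN => ?_⟩
  have hNpos : 0 < N := by omega
  have hN0 : (0:ℝ) < (N : ℝ) := by exact_mod_cast hNpos
  have hsplit : (N:ℝ) ^ (α + β + 1) = (N:ℝ) ^ α * (N:ℝ) ^ β * N := by
    rw [Real.rpow_add hN0, Real.rpow_add hN0, Real.rpow_one]
  constructor
  · -- lower bound
    set K := N / 3 with hKdef
    have hsub : Finset.Ico K (2 * K) ⊆ Finset.Ico 1 N := by
      intro n hn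
      rw [Finset.mem_Ico] at *
      omega
    have hterm : ∀ n ∈ Finset.Ico K (2 * K),
        mα * (N:ℝ) ^ α * (mβ * (N:ℝ) ^ β) ≤ (n : ℝ) ^ α * ((N : ℝ) - n) ^ β := by
      intro n hn
      rw [Finset.mem_Ico] at hn
      have h9n : N ≤ 9 * n := by omega
      have h8N : 9 * n ≤ 8 * N := by omega
      have hnN : n < N := by omega
      have h9nr : (N:ℝ) ≤ 9 * n := by exact_mod_cast h9n
      have h8Nr : 9 * (n:ℝ) ≤ 8 * N := by exact_mod_cast h8N
      have hnNr : (n:ℝ) ≤ N := by exact_mod_cast hnN.le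
      have ha := aux_min α hN0 (by linarith : (N:ℝ)/9 ≤ (n:ℝ)) hnNr
      have hb := aux_min β hN0 (by linarith : (N:ℝ)/9 ≤ (N:ℝ) - n) (by linarith)
      have h1 : 0 ≤ mβ * (N:ℝ) ^ β := by positivity
      have h2 : (0:ℝ) ≤ (n:ℝ) ^ α := Real.rpow_nonneg (by positivity) _
      exact mul_le_mul ha hb h1 h2
    have hcard := Finset.card_nsmul_le_sum (Finset.Ico K (2 * K)) _ _ hterm
    rw [Nat.card_Ico] at hcard
    have hKval : 2 * K - K = K := by omega
    rw [hKval] at hcard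
    have hsmul : (K : ℕ) • (mα * (N:ℝ) ^ α * (mβ * (N:ℝ) ^ β))
        = (K : ℝ) * (mα * (N:ℝ) ^ α * (mβ * (N:ℝ) ^ β)) := by
      rw [nsmul_eq_mul]
    rw [hsmul] at hcard
    have hmono : ∑ n ∈ Finset.Ico K (2 * K), (n : ℝ) ^ α * ((N : ℝ) - n) ^ β
        ≤ ∑ n ∈ Finset.Ico 1 N, (n : ℝ) ^ α * ((N : ℝ) - n) ^ β := by
      apply Finset.sum_le_sum_of_subset_of_nonneg hsub
      intro n hn _
      rw [Finset.mem_Ico] at hn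
      have : (n:ℝ) ≤ N := by exact_mod_cast hn.2.le
      have h2 : (0:ℝ) ≤ (N:ℝ) - n := by linarith
      exact mul_nonneg (Real.rpow_nonneg (by positivity) _) (Real.rpow_nonneg h2 _)
    have hK9 : N ≤ 9 * K := by omega
    have hK9r : (N:ℝ) / 9 ≤ K := by
      have : (N:ℝ) ≤ 9 * K := by exact_mod_cast hK9
      linarith
    calc mα * mβ / 9 * (N:ℝ) ^ (α + β + 1)
        = (mα * (N:ℝ) ^ α * (mβ * (N:ℝ) ^ β)) * ((N:ℝ) / 9) := by
          rw [hsplit]; ring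
      _ ≤ (mα * (N:ℝ) ^ α * (mβ * (N:ℝ) ^ β)) * K :=
          mul_le_mul_of_nonneg_left hK9r (by positivity)
      _ = (K : ℝ) * (mα * (N:ℝ) ^ α * (mβ * (N:ℝ) ^ β)) := by ring
      _ ≤ ∑ n ∈ Finset.Ico K (2 * K), (n : ℝ) ^ α * ((N : ℝ) - n) ^ β := hcard
      _ ≤ ∑ n ∈ Finset.Ico 1 N, (n : ℝ) ^ α * ((N : ℝ) - n) ^ β := hmono
  · -- upper bound
    have hrefl : ∑ n ∈ Finset.Ico 1 N, ((N : ℝ) - n) ^ β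
        = ∑ n ∈ Finset.Ico 1 N, (n : ℝ) ^ β := by
      refine Finset.sum_nbij' (fun n => N - n) (fun n => N - n) ?_ ?_ ?_ ?_ ?_
      · intro n hn; simp only [Finset.mem_Ico] at *; omega
      · intro n hn; simp only [Finset.mem_Ico] at *; omega
      · intro n hn; simp only [Finset.mem_Ico] at hn
        show N - (N - n) = n; omega
      · intro n hn; simp only [Finset.mem_Ico] at hn
        show N - (N - n) = n; omega
      · intro n hn; simp only [Finset.mem_Ico] at hn
        show ((N : ℝ) - n) ^ β = ((N - n : ℕ) : ℝ) ^ β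
        have hc : ((N - n : ℕ) : ℝ) = (N : ℝ) - n := by
          push_cast [Nat.cast_sub hn.2.le]
          ring
        rw [hc]
    have hterm : ∀ n ∈ Finset.Ico 1 N, (n : ℝ) ^ α * ((N : ℝ) - n) ^ β
        ≤ Kβ * (N:ℝ) ^ β * (n:ℝ) ^ α + Kα * (N:ℝ) ^ α * ((N:ℝ) - n) ^ β := by
      intro n hn
      rw [Finset.mem_Ico] at hn
      have h1 : (1:ℝ) ≤ n := by exact_mod_cast hn.1
      have h2 : (n:ℝ) + 1 ≤ N := by exact_mod_cast hn.2
      have hy0 : (0:ℝ) ≤ (N:ℝ) - n := by linarith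
      have hxa : (0:ℝ) ≤ (n:ℝ) ^ α := Real.rpow_nonneg (by linarith) _
      have hyb : (0:ℝ) ≤ ((N:ℝ) - n) ^ β := Real.rpow_nonneg hy0 _
      rcases le_or_gt (2 * (n:ℝ)) N with h | h
      · have hb := aux_max β hN0 (by linarith : (N:ℝ)/2 ≤ (N:ℝ) - n) (by linarith)
        have : (n:ℝ) ^ α * ((N:ℝ) - n) ^ β ≤ (n:ℝ) ^ α * (Kβ * (N:ℝ) ^ β) :=
          mul_le_mul_of_nonneg_left hb hxa
        have hterm2 : (0:ℝ) ≤ Kα * (N:ℝ) ^ α * ((N:ℝ) - n) ^ β := by positivity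
        nlinarith [this]
      · have ha := aux_max α hN0 (by linarith : (N:ℝ)/2 ≤ (n:ℝ)) (by linarith)
        have : (n:ℝ) ^ α * ((N:ℝ) - n) ^ β ≤ (Kα * (N:ℝ) ^ α) * ((N:ℝ) - n) ^ β :=
          mul_le_mul_of_nonneg_right ha hyb
        have hterm2 : (0:ℝ) ≤ Kβ * (N:ℝ) ^ β * (n:ℝ) ^ α := by positivity
        nlinarith [this]
    have hNa1 : (N:ℝ) ^ (α + 1) = (N:ℝ) ^ α * N := by
      rw [Real.rpow_add hN0, Real.rpow_one]
    have hNb1 : (N:ℝ) ^ (β + 1) = (N:ℝ) ^ β * N := by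
      rw [Real.rpow_add hN0, Real.rpow_one]
    calc ∑ n ∈ Finset.Ico 1 N, (n : ℝ) ^ α * ((N : ℝ) - n) ^ β
        ≤ ∑ n ∈ Finset.Ico 1 N,
            (Kβ * (N:ℝ) ^ β * (n:ℝ) ^ α + Kα * (N:ℝ) ^ α * ((N:ℝ) - n) ^ β) :=
          Finset.sum_le_sum hterm
      _ = Kβ * (N:ℝ) ^ β * (∑ n ∈ Finset.Ico 1 N, (n:ℝ) ^ α)
          + Kα * (N:ℝ) ^ α * (∑ n ∈ Finset.Ico 1 N, (n:ℝ) ^ β) := by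
          rw [Finset.sum_add_distrib, ← Finset.mul_sum, ← Finset.mul_sum, hrefl]
      _ ≤ Kβ * (N:ℝ) ^ β * (Kα / (α + 1) * (N:ℝ) ^ (α + 1))
          + Kα * (N:ℝ) ^ α * (Kβ / (β + 1) * (N:ℝ) ^ (β + 1)) := by
          gcongr
          · exact aux_sum α hα N
          · exact aux_sum β hβ N
      _ = (Kβ * (Kα / (α + 1)) + Kα * (Kβ / (β + 1))) * (N:ℝ) ^ (α + β + 1) := by
          rw [hsplit, hNa1, hNb1]; ring
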